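/- Let q ≥ 2 be an integer that is not prime, and let p_1 < p_2 < ... < p_m be the complete list of primes smaller than q. Then the set A = {(n_1, ..., n_m) ∈ ℕ^m : S_q(p_1^{n_1}·p_2^{n_2}···p_m^{n_m}) = 0} has asymptotic density 1 in ℕ^m: (1/N^m)·#{(n_1,...,n_m) ∈ {0, 1, ..., N−1}^m : the base-q expansion of p_1^{n_1}···p_m^{n_m} contains the digit 0} → 1 as N → ∞. -/

import Mathlib

open Filter

lemma zero_digit_of_all_large (q m : ℕ) (hq : 2 ≤ q) (hnp : ¬ q.Prime)
    (p : Fin m → ℕ) (hprime : ∀ i, (p i).Prime ∧ p i < q)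
    (hcomplete : ∀ r : ℕ, r.Prime → r < q → ∃ i, p i = r)
    (n : Fin m → ℕ) (hn : ∀ i, q ≤ n i) :
    0 ∈ Nat.digits q (∏ i, p i ^ n i) := by
  set M := ∏ i, p i ^ n i with hMdef
  have hM0 : M ≠ 0 := by
    rw [hMdef]
    exact Finset.prod_ne_zero_iff.mpr fun i _ => pow_ne_zero _ (hprime i).1.pos.ne'
  have hdvd : q ∣ M := by
    rw [← Nat.factorization_le_iff_dvd (by omega) hM0]
    rw [Finsupp.le_def]
    intro r
    by_cases hr : q.factorization r = 0
    · simp [hr]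
    · have hrmem : r ∈ q.primeFactors := by
        rw [← Nat.support_factorization]; exact Finsupp.mem_support_iff.mpr hr
      have hrp : r.Prime := Nat.prime_of_mem_primeFactors hrmem
      have hrdvd : r ∣ q := Nat.dvd_of_mem_primeFactors hrmem
      have hrlt : r < q := lt_of_le_of_ne (Nat.le_of_dvd (by omega) hrdvd)
        (by rintro rfl; exact hnp hrp)
      obtain ⟨i, rfl⟩ := hcomplete r hrp hrlt
      have h1 : q.factorization (p i) < q := Nat.factorization_lt _ (by omega)
      have h2 : n i ≤ M.factorization (p i) :=
        ((hprime i).1.pow_dvd_iff_le_factorization hM0).mp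
          (Finset.dvd_prod_of_mem _ (Finset.mem_univ i))
      have := hn i
      omega
  have hMq : q ≤ M := Nat.le_of_dvd (Nat.pos_of_ne_zero hM0) hdvd
  rw [Nat.digits_def' (by omega : 1 < q) (by omega : 0 < M)]
  have hmod : M % q = 0 := Nat.mod_eq_zero_of_dvd hdvd
  rw [hmod]
  exact List.mem_cons_self


/-- Let `q ≥ 2` be a non-prime integer and let `p_1 < p_2 < ... < p_m` be the
complete list of primes smaller than `q`.  Then the set of tuples
`(n_1, ..., n_m) ∈ ℕ^m` such that the base-`q` expansion of
`p_1^{n_1}···p_m^{n_m}` contains the digit `0` (i.e. `S_q` of the product is `0`)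
has asymptotic density `1` in `ℕ^m`. -/
theorem density_zero_digit_prime_products (q m : ℕ) (hq : 2 ≤ q) (hnp : ¬ q.Prime)
    (p : Fin m → ℕ) (hmono : StrictMono p)
    (hprime : ∀ i, (p i).Prime ∧ p i < q)
    (hcomplete : ∀ r : ℕ, r.Prime → r < q → ∃ i, p i = r) :
    Tendsto (fun N : ℕ =>
        (((Fintype.piFinset fun _ : Fin m => Finset.range N).filter fun n =>
            0 ∈ Nat.digits q (∏ i, p i ^ n i)).card : ℝ) / (N : ℝ) ^ m)
      atTop (nhds 1) := by
  have hlow : Tendsto (fun N : ℕ => (1 - (q : ℝ) / N) ^ m) atTop (nhds 1) := by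
    have h := ((tendsto_const_nhds (x := (1:ℝ)) (f := atTop)).sub (tendsto_const_div_atTop_nhds_zero_nat (q : ℝ))).pow m
    simpa using h
  apply tendsto_of_tendsto_of_tendsto_of_le_of_le' hlow tendsto_const_nhds
  · filter_upwards [eventually_ge_atTop (q + 1)] with N hN
    have hNpos : (0 : ℝ) < (N : ℝ) := by
      have : 0 < N := by omega
      exact_mod_cast this
    have hsub : Fintype.piFinset (fun _ : Fin m => Finset.Ico q N) ⊆
        (Fintype.piFinset fun _ : Fin m => Finset.range N).filter fun n =>
          0 ∈ Nat.digits q (∏ i, p i ^ n i) := by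
      intro n hn
      rw [Fintype.mem_piFinset] at hn
      rw [Finset.mem_filter, Fintype.mem_piFinset]
      refine ⟨fun i => Finset.mem_range.mpr (Finset.mem_Ico.mp (hn i)).2, ?_⟩
      exact zero_digit_of_all_large q m hq hnp p hprime hcomplete n
        (fun i => (Finset.mem_Ico.mp (hn i)).1)
    have hcard : (N - q) ^ m ≤ ((Fintype.piFinset fun _ : Fin m => Finset.range N).filter fun n =>
          0 ∈ Nat.digits q (∏ i, p i ^ n i)).card := by
      calc (N - q) ^ m = (Fintype.piFinset (fun _ : Fin m => Finset.Ico q N)).card := by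
            simp [Fintype.card_piFinset, Nat.card_Ico]
        _ ≤ _ := Finset.card_le_card hsub
    have h1 : (1 - (q : ℝ) / N) = ((N - q : ℕ) : ℝ) / N := by
      have hqN : q ≤ N := Nat.le_of_succ_le hN
      rw [Nat.cast_sub hqN]
      field_simp
    rw [h1, div_pow]
    rw [div_le_div_iff₀ (pow_pos hNpos m) (pow_pos hNpos m)]
    have : (((N - q : ℕ) : ℝ)) ^ m ≤
        (((Fintype.piFinset fun _ : Fin m => Finset.range N).filter fun n =>
          0 ∈ Nat.digits q (∏ i, p i ^ n i)).card : ℝ) := by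
      exact_mod_cast hcard
    exact mul_le_mul_of_nonneg_right this (le_of_lt (pow_pos hNpos m))
  · filter_upwards [eventually_ge_atTop 1] with N hN
    have hNpos : (0 : ℝ) < (N : ℝ) := by exact_mod_cast hN
    rw [div_le_one (pow_pos hNpos m)]
    have hc : ((Fintype.piFinset fun _ : Fin m => Finset.range N).filter fun n =>
          0 ∈ Nat.digits q (∏ i, p i ^ n i)).card ≤ N ^ m := by
      calc _ ≤ (Fintype.piFinset fun _ : Fin m => Finset.range N).card :=
            Finset.card_filter_le _ _
        _ = N ^ m := by simp [Fintype.card_piFinset]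
    exact_mod_cast hc
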